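/- arXiv:2308.03761 — 2 statements merged into one kernel-verified Lean document; each statement's English description precedes it below -/
import Mathlib

section
/- Let R > 1 be a real number, let (n_ν)_{ν≥1} be a strictly increasing sequence of positive integers, and let (a_ν)_{ν≥1} be complex numbers with |a_ν| > Rⁿᵛ/2 (that is, |a_ν| > R^{n_ν}/2) for every ν ≥ 1. For each integer λ ≥ 1 let F_λ be the power series whose coefficient of z^{n_ν} equals a_ν when 2^λ divides ν, and all of whose other coefficients are zero. Then for all integers m ≥ 1 and μ ≥ 0 and all complex numbers c_m, c_{m+1}, …, c_{m+μ} with c_m ≠ 0, the power series Σ_{λ=m}^{m+μ} c_λ · F_λ has radius of convergence at most 1/R. In particular, since 1/R < 1, the classes of the F_λ (λ ≥ 1) are linearly independent modulo the space of power series with radius of convergence at least 1. -/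
open FormalMultilinearSeries

/-- Let `R > 1`, `(n ν)_{ν ≥ 1}` a strictly increasing sequence of positive integers and
`(a ν)_{ν ≥ 1}` complex numbers with `‖a ν‖ > Rⁿᵛ / 2`.  For `l ≥ 1`, let `F l` be the
coefficient sequence of the power series whose coefficient of `z ^ (n ν)` is `a ν` when
`2 ^ l ∣ ν` and all of whose other coefficients vanish.  Then every linear combination
`Σ_{l = m}^{m + μ} c l • F l` with `m ≥ 1` and `c m ≠ 0` has radius of convergence at
most `1 / R`; in particular the classes of the `F l` (`l ≥ 1`) are linearly independent
modulo the power series with radius of convergence at least `1`. -/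
theorem stmt_4
    (R : ℝ) (hR : 1 < R)
    (n : ℕ → ℕ)
    (hnpos : ∀ ν, 1 ≤ ν → 0 < n ν)
    (hnmono : ∀ ν μ, 1 ≤ ν → ν < μ → n ν < n μ)
    (a : ℕ → ℂ)
    (ha : ∀ ν, 1 ≤ ν → R ^ (n ν) / 2 < ‖a ν‖)
    (F : ℕ → ℕ → ℂ)
    (hF1 : ∀ l ν, 1 ≤ l → 1 ≤ ν → 2 ^ l ∣ ν → F l (n ν) = a ν)
    (hF0 : ∀ l k, 1 ≤ l → (¬ ∃ ν, 1 ≤ ν ∧ 2 ^ l ∣ ν ∧ n ν = k) → F l k = 0) :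
    (∀ m μ : ℕ, 1 ≤ m → ∀ c : ℕ → ℂ, c m ≠ 0 →
      (ofScalars ℂ (fun k => ∑ l ∈ Finset.Icc m (m + μ), c l * F l k)).radius
        ≤ ENNReal.ofReal (1 / R)) ∧
    (∀ c : ℕ →₀ ℂ, (∀ l ∈ c.support, 1 ≤ l) →
      (1 : ENNReal) ≤ (ofScalars ℂ (fun k => ∑ l ∈ c.support, c l * F l k)).radius →
      c = 0) := by
  have main : ∀ m μ : ℕ, 1 ≤ m → ∀ c : ℕ → ℂ, c m ≠ 0 →
      (ofScalars ℂ (fun k => ∑ l ∈ Finset.Icc m (m + μ), c l * F l k)).radius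
        ≤ ENNReal.ofReal (1 / R) := by
    intro m μ hm c hcm
    by_contra hlt
    push_neg at hlt
    obtain ⟨r, hr1, hr2⟩ := ENNReal.lt_iff_exists_nnreal_btwn.mp hlt
    set p := ofScalars ℂ (fun k => ∑ l ∈ Finset.Icc m (m + μ), c l * F l k) with hp
    have hto : Filter.Tendsto (fun k : ℕ => ‖p k‖ * (r : ℝ) ^ k) Filter.atTop (nhds 0) :=
      Asymptotics.isLittleO_one_iff ℝ |>.mp (p.isLittleO_one_of_lt_radius hr2)
    -- the subsequence ν j = 2^m * (2j+1)
    set g : ℕ → ℕ := fun j => 2 ^ m * (2 * j + 1) with hg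
    have hg1 : ∀ j, 1 ≤ g j := fun j =>
      Nat.one_le_iff_ne_zero.mpr (by positivity)
    have hgmono : StrictMono g := fun i j hij => by
      simp only [hg]
      have : 2 * i + 1 < 2 * j + 1 := by omega
      exact Nat.mul_lt_mul_of_le_of_lt (le_refl _) this (by positivity)
    have hkmono : StrictMono (fun j => n (g j)) := fun i j hij =>
      hnmono _ _ (hg1 i) (hgmono hij)
    have hktop : Filter.Tendsto (fun j => n (g j)) Filter.atTop Filter.atTop :=
      hkmono.tendsto_atTop
    have hto2 : Filter.Tendsto (fun j : ℕ => ‖p (n (g j))‖ * (r : ℝ) ^ (n (g j)))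
        Filter.atTop (nhds 0) := hto.comp hktop
    -- coefficient identity
    have hcoef : ∀ j, (∑ l ∈ Finset.Icc m (m + μ), c l * F l (n (g j))) = c m * a (g j) := by
      intro j
      rw [Finset.sum_eq_single m]
      · rw [hF1 m (g j) hm (hg1 j) ⟨2 * j + 1, rfl⟩]
      · intro l hl hlm
        have hlmem : m ≤ l := (Finset.mem_Icc.mp hl).1
        have hl1 : 1 ≤ l := le_trans hm hlmem
        have hlgt : m < l := lt_of_le_of_ne hlmem (Ne.symm hlm)
        have : F l (n (g j)) = 0 := by
          apply hF0 l _ hl1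
          rintro ⟨ν, hν1, hνdvd, hνeq⟩
          have hν : ν = g j := by
            rcases lt_trichotomy ν (g j) with h | h | h
            · exact absurd hνeq (hnmono ν (g j) hν1 h).ne
            · exact h
            · exact absurd hνeq.symm (hnmono (g j) ν (hg1 j) h).ne
          subst hν
          -- 2 ^ l ∣ 2 ^ m * (2j+1) with l > m : impossible
          have h2 : 2 ^ (m + 1) ∣ 2 ^ m * (2 * j + 1) :=
            dvd_trans (pow_dvd_pow 2 hlgt) hνdvd
          have : (2 : ℕ) ∣ 2 * j + 1 := by
            have := (Nat.pow_dvd_pow_iff_le_right (by norm_num : 1 < 2)).mpr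
              (le_refl (m + 1))
            rcases h2 with ⟨t, ht⟩
            have : 2 ^ m * (2 * j + 1) = 2 ^ m * (2 * t) := by
              rw [ht, pow_succ]; ring
            have h3 : 2 * j + 1 = 2 * t := Nat.eq_of_mul_eq_mul_left (by positivity) this
            exact ⟨t, h3⟩
          omega
        simp [this]
      · intro h
        exact absurd (Finset.mem_Icc.mpr ⟨le_refl m, Nat.le_add_right m μ⟩) h
    -- lower bound
    have hrR : 1 < R * r := by
      have h1R : (0:ℝ) < 1 / R := by positivity
      have : (1 / R : ℝ) < r := by
        have := hr1
        rw [← ENNReal.ofReal_coe_nnreal, ENNReal.ofReal_lt_ofReal_iff_of_nonneg h1R.le] at this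
        exact this
      calc (1:ℝ) = R * (1 / R) := by field_simp
        _ < R * r := by
            apply mul_lt_mul_of_pos_left this (by linarith : (0:ℝ) < R)
    have hlb : ∀ j, ‖c m‖ / 2 ≤ ‖p (n (g j))‖ * (r : ℝ) ^ (n (g j)) := by
      intro j
      have hnorm : ‖p (n (g j))‖ = ‖c m‖ * ‖a (g j)‖ := by
        rw [hp, ofScalars_norm, hcoef j, norm_mul]
      rw [hnorm]
      have haj : R ^ (n (g j)) / 2 < ‖a (g j)‖ := ha _ (hg1 j)
      have hcm : (0:ℝ) < ‖c m‖ := norm_pos_iff.mpr hcm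
      have hrpos : (0:ℝ) ≤ (r:ℝ) := r.coe_nonneg
      have h1 : ‖c m‖ * (R ^ (n (g j)) / 2) * (r:ℝ) ^ (n (g j)) ≤
          ‖c m‖ * ‖a (g j)‖ * (r:ℝ) ^ (n (g j)) := by
        apply mul_le_mul_of_nonneg_right _ (pow_nonneg hrpos _)
        exact mul_le_mul_of_nonneg_left haj.le hcm.le
      refine le_trans ?_ h1
      have : ‖c m‖ * (R ^ (n (g j)) / 2) * (r:ℝ) ^ (n (g j))
          = ‖c m‖ / 2 * (R * r) ^ (n (g j)) := by
        rw [mul_pow]; ring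
      rw [this]
      nth_rewrite 1 [← mul_one (‖c m‖ / 2)]
      apply mul_le_mul_of_nonneg_left (one_le_pow₀ hrR.le) (by positivity)
    -- contradiction
    have hcm : (0:ℝ) < ‖c m‖ / 2 := by
      have : (0:ℝ) < ‖c m‖ := norm_pos_iff.mpr hcm
      linarith
    have := (hto2.eventually (eventually_lt_nhds hcm)).exists
    obtain ⟨j, hj⟩ := this
    exact absurd (hlb j) (not_le.mpr hj)
  refine ⟨main, ?_⟩
  intro c hc hrad
  by_contra hc0
  have hsupp : c.support.Nonempty := Finsupp.support_nonempty_iff.mpr hc0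
  set m := c.support.min' hsupp with hm
  have hmmem : m ∈ c.support := c.support.min'_mem hsupp
  have hm1 : 1 ≤ m := hc m hmmem
  have hcm : c m ≠ 0 := Finsupp.mem_support_iff.mp hmmem
  set M := c.support.max' hsupp with hM
  have hmM : m ≤ M := c.support.min'_le _ (c.support.max'_mem hsupp)
  have hsub : c.support ⊆ Finset.Icc m (m + (M - m)) := by
    intro l hl
    rw [Finset.mem_Icc]
    exact ⟨c.support.min'_le l hl, by
      have := c.support.le_max' l hl; omega⟩
  have heq : (fun k => ∑ l ∈ c.support, c l * F l k) =
      fun k => ∑ l ∈ Finset.Icc m (m + (M - m)), c l * F l k := by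
    funext k
    apply Finset.sum_subset hsub
    intro l _ hl
    rw [Finsupp.notMem_support_iff.mp hl, zero_mul]
  rw [heq] at hrad
  have := le_trans hrad (main m (M - m) hm1 c hcm)
  have hlt : ENNReal.ofReal (1 / R) < 1 := by
    rw [← ENNReal.ofReal_one]
    apply ENNReal.ofReal_lt_ofReal_iff_of_nonneg (by positivity) |>.mpr
    rw [div_lt_one (by linarith)]; exact hR
  exact absurd this (not_le.mpr hlt)
end

section
/- Let τ be a complex number with Im τ > 0, and let p, q be real numbers such that there is no positive integer n with both np ∈ ℤ and nq ∈ ℤ. Let F : ℂ × ℂ → ℂ be an entire (everywhere complex-differentiable) function satisfying, for all (z, w) ∈ ℂ × ℂ: F(z, w + 1) = F(z, w), F(z + 1, w + p) = F(z, w), and F(z + τ, w + q) = F(z, w). Then F is constant. -/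
open Complex Set MeasureTheory Metric Filter Function

noncomputable def stmt9E (n : ℤ) (w : ℂ) : ℂ := Complex.exp (-(2 * Real.pi * n * Complex.I) * w)

lemma stmt9E_add (n : ℤ) (a b : ℂ) : stmt9E n (a + b) = stmt9E n a * stmt9E n b := by
  rw [stmt9E, stmt9E, stmt9E, mul_add, Complex.exp_add]

lemma stmt9E_one (n : ℤ) : stmt9E n 1 = 1 := by
  rw [stmt9E]
  convert Complex.exp_int_mul_two_pi_mul_I (-n) using 2
  push_cast
  ring

lemma stmt9E_period (n : ℤ) (w : ℂ) : stmt9E n (w + 1) = stmt9E n w := by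
  rw [stmt9E_add, stmt9E_one, mul_one]

lemma stmt9E_norm (n : ℤ) (x : ℝ) : ‖stmt9E n (x : ℂ)‖ = 1 := by
  rw [stmt9E, Complex.norm_exp]
  norm_num [Complex.mul_re]

lemma stmt9E_ne_zero (n : ℤ) (w : ℂ) : stmt9E n w ≠ 0 := Complex.exp_ne_zero _

lemma stmt9E_zero (w : ℂ) : stmt9E 0 w = 1 := by simp [stmt9E]

lemma stmt9E_cont (n : ℤ) : Continuous fun x : ℝ => stmt9E n (x : ℂ) :=
  Complex.continuous_exp.comp (continuous_const.mul Complex.continuous_ofReal)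

lemma stmt9E_fourier (n : ℤ) (x : ℝ) :
    (fourier (-n) (x : AddCircle (1:ℝ)) : ℂ) = stmt9E n (x : ℂ) := by
  rw [fourier_coe_apply, stmt9E]
  push_cast
  ring_nf

lemma stmt9_liou (τ : ℂ) (hτ : 0 < τ.im) (f : ℂ → ℂ) (hf : Differentiable ℂ f)
    (hp1 : ∀ z, ‖f (z + 1)‖ = ‖f z‖) (hpτ : ∀ z, ‖f (z + τ)‖ = ‖f z‖) :
    ∀ z w : ℂ, f z = f w := by
  have hm : ∀ (m : ℤ) (z : ℂ), ‖f (z + (m : ℂ))‖ = ‖f z‖ := by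
    intro m
    induction m using Int.induction_on with
    | zero => simp
    | succ k ih =>
      intro z
      have e : z + ((k : ℤ) + 1 : ℤ) = (z + (k : ℤ)) + 1 := by push_cast; ring
      rw [e, hp1, ih]
    | pred k ih =>
      intro z
      have e : (z + ((-(k : ℤ) - 1 : ℤ) : ℂ)) + 1 = z + ((-(k:ℤ) : ℤ) : ℂ) := by push_cast; ring
      have := hp1 (z + ((-(k : ℤ) - 1 : ℤ) : ℂ))
      rw [e, ih] at this
      exact this.symm
  have hk : ∀ (m : ℤ) (z : ℂ), ‖f (z + (m : ℂ) * τ)‖ = ‖f z‖ := by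
    intro m
    induction m using Int.induction_on with
    | zero => simp
    | succ k ih =>
      intro z
      have e : z + (((k : ℤ) + 1 : ℤ) : ℂ) * τ = (z + (k : ℤ) * τ) + τ := by push_cast; ring
      rw [e, hpτ, ih]
    | pred k ih =>
      intro z
      have e : (z + (((-(k : ℤ) - 1 : ℤ)) : ℂ) * τ) + τ = z + (((-(k:ℤ) : ℤ)) : ℂ) * τ := by
        push_cast; ring
      have := hpτ (z + (((-(k : ℤ) - 1 : ℤ)) : ℂ) * τ)
      rw [e, ih] at this
      exact this.symm
  apply fun z w => hf.apply_eq_apply_of_bounded ?_ z w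
  set K : Set ℂ := (fun ab : ℝ × ℝ => (ab.1 : ℂ) + (ab.2 : ℂ) * τ) '' (Icc 0 1 ×ˢ Icc 0 1) with hK
  have hKc : IsCompact K :=
    (isCompact_Icc.prod isCompact_Icc).image (by continuity)
  have hKne : K.Nonempty := ⟨_, ⟨(0, 0), by simp, rfl⟩⟩
  obtain ⟨v, -, hv⟩ := hKc.exists_isMaxOn hKne (hf.continuous.norm.continuousOn)
  rw [isBounded_iff_forall_norm_le]
  refine ⟨‖f v‖, ?_⟩
  rintro - ⟨z, rfl⟩
  obtain ⟨b, hb⟩ : ∃ b : ℝ, b = z.im / τ.im := ⟨_, rfl⟩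
  obtain ⟨a, ha⟩ : ∃ a : ℝ, a = z.re - b * τ.re := ⟨_, rfl⟩
  have hzdec : z = (((Int.fract a : ℝ) : ℂ) + ((Int.fract b : ℝ) : ℂ) * τ) + (⌊a⌋ : ℂ) + (⌊b⌋ : ℂ) * τ := by
    apply Complex.ext
    · simp only [Complex.add_re, Complex.mul_re, Complex.ofReal_re, Complex.ofReal_im,
        Complex.intCast_re, Complex.intCast_im]
      have h1 : Int.fract a + (⌊a⌋ : ℝ) = a := by
        rw [add_comm]; exact Int.floor_add_fract a
      have h2 : Int.fract b + (⌊b⌋ : ℝ) = b := by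
        rw [add_comm]; exact Int.floor_add_fract b
      linear_combination -h1 - τ.re * h2 - ha
    · simp only [Complex.add_im, Complex.mul_im, Complex.ofReal_re, Complex.ofReal_im,
        Complex.intCast_re, Complex.intCast_im]
      have h2 : Int.fract b + (⌊b⌋ : ℝ) = b := by
        rw [add_comm]; exact Int.floor_add_fract b
      have hbz : b * τ.im = z.im := by rw [hb]; exact div_mul_cancel₀ _ (ne_of_gt hτ)
      linear_combination -τ.im * h2 - hbz
  have h0 : ‖f z‖ = ‖f (((Int.fract a : ℝ) : ℂ) + ((Int.fract b : ℝ) : ℂ) * τ)‖ := by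
    conv_lhs => rw [hzdec]
    rw [show (((Int.fract a : ℝ) : ℂ) + ((Int.fract b : ℝ) : ℂ) * τ) + (⌊a⌋ : ℂ) + (⌊b⌋ : ℂ) * τ
        = ((((Int.fract a : ℝ) : ℂ) + ((Int.fract b : ℝ) : ℂ) * τ) + (⌊a⌋ : ℂ)) + (⌊b⌋ : ℂ) * τ from by ring]
    rw [hk, hm]
  rw [h0]
  exact hv ⟨(Int.fract a, Int.fract b),
    ⟨⟨(Int.fract_nonneg a), (Int.fract_lt_one a).le⟩,
     ⟨(Int.fract_nonneg b), (Int.fract_lt_one b).le⟩⟩, rfl⟩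

lemma stmt9_diff {F : ℂ × ℂ → ℂ} (hF : Differentiable ℂ F) {φ : ℝ → ℂ} (hφ : Continuous φ)
    (hφ1 : ∀ x : ℝ, ‖φ x‖ ≤ 1) :
    Differentiable ℂ fun z => ∫ x in (0:ℝ)..1, F (z, (x : ℂ)) * φ x := by
  intro z₀
  obtain ⟨B, hB⟩ : ∃ B : ℝ, ∀ (u : ℂ) (t : ℝ), u ∈ closedBall z₀ 2 → t ∈ Icc (0:ℝ) 1 →
      ‖F (u, (t : ℂ))‖ ≤ B := by
    have hS : IsCompact (closedBall z₀ 2 ×ˢ (Complex.ofReal '' Icc 0 1)) :=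
      (isCompact_closedBall _ _).prod (isCompact_Icc.image Complex.continuous_ofReal)
    have hne : (closedBall z₀ 2 ×ˢ (Complex.ofReal '' Icc 0 1)).Nonempty :=
      ⟨(z₀, 0), by simp, ⟨0, by norm_num, by norm_num⟩⟩
    obtain ⟨v, -, hv⟩ := hS.exists_isMaxOn hne (hF.continuous.norm.continuousOn)
    exact ⟨‖F v‖, fun u t hu ht => hv ⟨hu, ⟨t, ht, rfl⟩⟩⟩
  have hDer : ∀ (x : ℂ) (t : ℝ),
      HasDerivAt (fun u : ℂ => F (u, (t : ℂ))) (fderiv ℂ F (x, (t : ℂ)) (1, 0)) x := by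
    intro x t
    have h1 : HasDerivAt (fun u : ℂ => (u, (t : ℂ))) ((1 : ℂ), (0 : ℂ)) x :=
      (hasDerivAt_id x).prodMk (hasDerivAt_const x _)
    exact (hF (x, (t : ℂ))).hasFDerivAt.comp_hasDerivAt x h1
  have key := intervalIntegral.hasDerivAt_integral_of_dominated_loc_of_deriv_le
    (F := fun z t => F (z, (t : ℂ)) * φ t)
    (F' := fun z t => fderiv ℂ F (z, (t : ℂ)) (1, 0) * φ t)
    (x₀ := z₀) (a := 0) (b := 1) (bound := fun _ => B) (μ := volume) (s := ball z₀ 1) (ball_mem_nhds z₀ zero_lt_one)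
    ?_ ?_ ?_ ?_ ?_ ?_
  · exact key.2.differentiableAt
  · refine Eventually.of_forall fun x => ?_
    exact ((hF.continuous.comp (continuous_const.prodMk Complex.continuous_ofReal)).mul
      hφ).aestronglyMeasurable
  · exact ((hF.continuous.comp (continuous_const.prodMk Complex.continuous_ofReal)).mul
      hφ).intervalIntegrable _ _
  · have M1 : Measurable fun t : ℝ => fderiv ℂ F (z₀, (t : ℂ)) :=
      (measurable_fderiv ℂ F).comp (measurable_const.prodMk Complex.measurable_ofReal)
    have M2 : Measurable fun t : ℝ => fderiv ℂ F (z₀, (t : ℂ)) ((1 : ℂ), (0 : ℂ)) :=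
      ((ContinuousLinearMap.apply ℂ ℂ ((1 : ℂ), (0 : ℂ))).continuous.measurable).comp M1
    exact (M2.mul hφ.measurable).aestronglyMeasurable
  · refine Eventually.of_forall fun t ht x hx => ?_
    have htI : t ∈ Icc (0:ℝ) 1 := by
      rw [uIoc_of_le (zero_le_one)] at ht
      exact ⟨ht.1.le, ht.2⟩
    have hsl : Differentiable ℂ fun u : ℂ => F (u, (t : ℂ)) :=
      hF.comp (differentiable_id.prodMk (differentiable_const _))
    have hC : ∀ u ∈ sphere x 1, ‖F (u, (t : ℂ))‖ ≤ B := by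
      intro u hu
      refine hB u t ?_ htI
      rw [mem_closedBall]
      have h1 : dist u x = 1 := mem_sphere.1 hu
      have h2 : dist x z₀ < 1 := mem_ball.1 hx
      calc dist u z₀ ≤ dist u x + dist x z₀ := dist_triangle _ _ _
        _ ≤ 2 := by rw [h1]; linarith
    have hcd := Complex.norm_deriv_le_of_forall_mem_sphere_norm_le one_pos
      (hsl.diffContOnCl) hC
    have hder : deriv (fun u : ℂ => F (u, (t : ℂ))) x = fderiv ℂ F (x, (t : ℂ)) (1, 0) :=
      (hDer x t).deriv
    rw [norm_mul]
    calc ‖fderiv ℂ F (x, (t : ℂ)) (1, 0)‖ * ‖φ t‖ ≤ (B / 1) * 1 := by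
          refine mul_le_mul ?_ (hφ1 t) (norm_nonneg _) ?_
          · rw [← hder]; exact hcd
          · have h0 : (0:ℝ) ≤ B := le_trans (norm_nonneg (F (z₀, (0:ℂ))))
              (by simpa using hB z₀ 0 (by simp) (by norm_num))
            linarith
      _ = B := by ring
  · exact intervalIntegrable_const
  · refine Eventually.of_forall fun t ht x hx => ?_
    exact (hDer x t).mul_const (φ t)
lemma stmt9_rect {F : ℂ × ℂ → ℂ} (hF : Differentiable ℂ F)
    (h1 : ∀ z w : ℂ, F (z, w + 1) = F (z, w)) (n : ℤ) (z : ℂ) (y : ℝ) :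
    (∫ x in (0:ℝ)..1, F (z, (x:ℂ) + (y:ℂ) * Complex.I) * stmt9E n (x:ℂ))
        * stmt9E n ((y:ℂ) * Complex.I)
      = ∫ x in (0:ℝ)..1, F (z, (x:ℂ)) * stmt9E n (x:ℂ) := by
  set G : ℂ → ℂ := fun w => F (z, w) * stmt9E n w with hG
  have hGd : Differentiable ℂ G :=
    (hF.comp ((differentiable_const z).prodMk differentiable_id)).mul
      ((differentiable_id.const_mul _).cexp)
  have hGper : ∀ w, G (w + 1) = G w := by
    intro w
    simp only [hG]
    rw [h1, stmt9E_period]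
  have hrect := Complex.integral_boundary_rect_eq_zero_of_differentiableOn G 0
    (1 + (y:ℂ)*Complex.I) hGd.differentiableOn
  simp only [Complex.zero_re, Complex.zero_im, Complex.add_re, Complex.add_im, Complex.one_re,
    Complex.one_im, Complex.ofReal_zero, Complex.mul_re, Complex.mul_im, Complex.I_re,
    Complex.I_im, Complex.ofReal_re, Complex.ofReal_im] at hrect
  norm_num at hrect
  have hvert : (∫ t : ℝ in (0:ℝ)..y, G (1 + (t:ℂ) * Complex.I))
      = ∫ t : ℝ in (0:ℝ)..y, G ((t:ℂ) * Complex.I) := by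
    refine intervalIntegral.integral_congr fun t _ => ?_
    rw [show (1 : ℂ) + (t:ℂ) * Complex.I = ((t:ℂ) * Complex.I) + 1 by ring, hGper]
  rw [hvert] at hrect
  have hmain : (∫ x : ℝ in (0:ℝ)..1, G (x:ℂ)) = ∫ x : ℝ in (0:ℝ)..1, G ((x:ℂ) + (y:ℂ) * Complex.I) := by
    linear_combination hrect
  have hexp : (∫ x : ℝ in (0:ℝ)..1, G ((x:ℂ) + (y:ℂ) * Complex.I))
      = (∫ x in (0:ℝ)..1, F (z, (x:ℂ) + (y:ℂ) * Complex.I) * stmt9E n (x:ℂ))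
          * stmt9E n ((y:ℂ) * Complex.I) := by
    rw [← intervalIntegral.integral_mul_const]
    refine intervalIntegral.integral_congr fun x _ => ?_
    simp only [hG]
    rw [stmt9E_add]
    ring
  rw [hexp] at hmain
  exact hmain.symm
lemma stmt9_shift {F : ℂ × ℂ → ℂ} (hFc : Continuous F)
    (h1 : ∀ z w : ℂ, F (z, w + 1) = F (z, w))
    (n : ℤ) (z z' : ℂ) (r : ℝ) (hzz : ∀ x : ℝ, F (z', (x:ℂ)) = F (z, ((x - r : ℝ) : ℂ))) :
    (∫ x in (0:ℝ)..1, F (z', (x:ℂ)) * stmt9E n (x:ℂ))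
      = stmt9E n (r:ℂ) * ∫ x in (0:ℝ)..1, F (z, (x:ℂ)) * stmt9E n (x:ℂ) := by
  set g : ℝ → ℂ := fun x => F (z, (x:ℂ)) * stmt9E n (x:ℂ) with hg
  have hper : Periodic g 1 := by
    intro x
    simp only [hg]
    have : ((x + 1 : ℝ) : ℂ) = (x : ℂ) + 1 := by push_cast; ring
    rw [this, h1, stmt9E_period]
  have step1 : (∫ x in (0:ℝ)..1, F (z', (x:ℂ)) * stmt9E n (x:ℂ))
      = (∫ x in (0:ℝ)..1, g (x - r)) * stmt9E n (r:ℂ) := by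
    rw [← intervalIntegral.integral_mul_const]
    refine intervalIntegral.integral_congr fun x _ => ?_
    rw [hzz]
    simp only [hg]
    have : (x : ℂ) = ((x - r : ℝ) : ℂ) + (r : ℂ) := by push_cast; ring
    rw [this, stmt9E_add]
    ring
  have step2 : (∫ x in (0:ℝ)..1, g (x - r)) = ∫ x in (0:ℝ)..1, g x := by
    rw [intervalIntegral.integral_comp_sub_right g r]
    have := hper.intervalIntegral_add_eq (0 - r) 0
    rw [zero_add] at this
    rw [show (1:ℝ) - r = (0 - r) + 1 by ring, show (0:ℝ) - r = 0 - r from rfl]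
    exact this
  rw [step1, step2, mul_comm]
lemma stmt9_fourier {φ : ℝ → ℂ} (hφc : Continuous φ) (hφp : Periodic φ 1) (C : ℂ)
    (hn : ∀ n : ℤ, n ≠ 0 → (∫ x in (0:ℝ)..1, φ x * stmt9E n (x:ℂ)) = 0)
    (h0 : (∫ x in (0:ℝ)..1, φ x * stmt9E 0 (x:ℂ)) = C) :
    ∀ x ∈ Ico (0:ℝ) 1, φ x = C := by
  haveI : Fact ((0:ℝ) < 1) := ⟨one_pos⟩
  have hφ01 : φ 0 = φ 1 := by
    have := hφp 0
    rw [zero_add] at this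
    exact this.symm
  set fC : C(AddCircle (1:ℝ), ℂ) :=
    ⟨AddCircle.liftIco 1 0 φ, AddCircle.liftIco_zero_continuous hφ01 hφc.continuousOn⟩ with hfC
  have hcoe : ∀ x ∈ Ico (0:ℝ) 1, fC (x : AddCircle (1:ℝ)) = φ x := fun x hx =>
    AddCircle.liftIco_zero_coe_apply hx
  have hcoef : ∀ n : ℤ, fourierCoeff (⇑fC) n = ∫ x in (0:ℝ)..1, φ x * stmt9E n (x:ℂ) := by
    intro n
    rw [fourierCoeff_eq_intervalIntegral (⇑fC) n 0]
    rw [zero_add]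
    norm_num
    refine intervalIntegral.integral_congr_ae ?_
    have hone : (MeasureTheory.volume : Measure ℝ) {(1:ℝ)} = 0 := Real.volume_singleton
    have hae : ∀ᵐ x : ℝ, x ≠ 1 := by
      rw [MeasureTheory.ae_iff]
      refine measure_mono_null ?_ hone
      intro x hx
      simp only [mem_setOf_eq, not_not] at hx
      simp [hx]
    filter_upwards [hae] with x hx hxI
    rw [uIoc_of_le zero_le_one] at hxI
    have hxm : x ∈ Ico (0:ℝ) 1 := ⟨hxI.1.le, lt_of_le_of_ne hxI.2 hx⟩
    rw [hcoe x hxm, mul_comm]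
    congr 1
    rw [← Complex.exp_conj, stmt9E]
    congr 1
    rw [show (2 * (Real.pi:ℂ) * Complex.I * (n:ℂ) * (x:ℂ))
        = (((2 * Real.pi * n * x : ℝ)):ℂ) * Complex.I by push_cast; ring]
    rw [map_mul, Complex.conj_ofReal, Complex.conj_I]
    push_cast
    ring
  have hsum : Summable (fourierCoeff (⇑fC)) := by
    refine summable_of_ne_finset_zero (s := ({0} : Finset ℤ)) fun n hns => ?_
    rw [hcoef]
    exact hn n (by simpa using hns)
  intro x hx
  have hps := has_pointwise_sum_fourier_series_of_summable hsum (x : AddCircle (1:ℝ))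
  have hsingle : HasSum (fun i : ℤ => fourierCoeff (⇑fC) i • fourier i (x : AddCircle (1:ℝ)))
      (fourierCoeff (⇑fC) 0 • fourier 0 (x : AddCircle (1:ℝ))) := by
    refine hasSum_single 0 fun b hb => ?_
    rw [hcoef b, hn b hb, zero_smul]
  have heq := hps.unique hsingle
  rw [hcoe x hx] at heq
  rw [heq, fourier_zero, smul_eq_mul, mul_one, hcoef, h0]


/-- Let `τ` have positive imaginary part and let `p, q` be real numbers such that no
positive integer `n` satisfies both `np ∈ ℤ` and `nq ∈ ℤ`.  Every entire function
`F : ℂ × ℂ → ℂ` satisfying `F (z, w + 1) = F (z, w)`, `F (z + 1, w + p) = F (z, w)` and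
`F (z + τ, w + q) = F (z, w)` is constant. -/
theorem stmt_9
    (τ : ℂ) (hτ : 0 < τ.im) (p q : ℝ)
    (hpq : ¬ ∃ n : ℕ, 0 < n ∧ (∃ a : ℤ, (n : ℝ) * p = (a : ℝ)) ∧
      (∃ b : ℤ, (n : ℝ) * q = (b : ℝ)))
    (F : ℂ × ℂ → ℂ) (hF : Differentiable ℂ F)
    (h1 : ∀ z w : ℂ, F (z, w + 1) = F (z, w))
    (h2 : ∀ z w : ℂ, F (z + 1, w + (p : ℂ)) = F (z, w))
    (h3 : ∀ z w : ℂ, F (z + τ, w + (q : ℂ)) = F (z, w)) :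
    ∀ x y : ℂ × ℂ, F x = F y := by
  -- iterated periodicity in `w`
  have hZ : ∀ (z w : ℂ) (m : ℤ), F (z, w + (m : ℂ)) = F (z, w) := by
    intro z w m
    induction m using Int.induction_on with
    | zero => simp
    | succ k ih =>
      have e : w + (((k : ℤ) + 1 : ℤ) : ℂ) = (w + (k : ℤ)) + 1 := by push_cast; ring
      rw [e, h1, ih]
    | pred k ih =>
      have e : (w + ((-(k : ℤ) - 1 : ℤ) : ℂ)) + 1 = w + ((-(k : ℤ) : ℤ) : ℂ) := by push_cast; ring
      have := h1 z (w + ((-(k : ℤ) - 1 : ℤ) : ℂ))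
      rw [e, ih] at this
      exact this.symm
  -- the Fourier coefficients
  set c : ℤ → ℂ → ℂ := fun n z => ∫ x in (0:ℝ)..1, F (z, (x : ℂ)) * stmt9E n (x : ℂ) with hc
  have hcd : ∀ n : ℤ, Differentiable ℂ (c n) := fun n =>
    stmt9_diff hF (stmt9E_cont n) fun x => le_of_eq (stmt9E_norm n x)
  -- quasi-periodicity of the coefficients
  have hcp : ∀ (n : ℤ) (z : ℂ), c n (z + 1) = stmt9E n (p : ℂ) * c n z := by
    intro n z
    refine stmt9_shift hF.continuous h1 n z (z + 1) p fun x => ?_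
    have e : ((x - p : ℝ) : ℂ) + (p : ℂ) = (x : ℂ) := by push_cast; ring
    have := h2 z ((x - p : ℝ) : ℂ)
    rw [e] at this
    exact this
  have hcq : ∀ (n : ℤ) (z : ℂ), c n (z + τ) = stmt9E n (q : ℂ) * c n z := by
    intro n z
    refine stmt9_shift hF.continuous h1 n z (z + τ) q fun x => ?_
    have e : ((x - q : ℝ) : ℂ) + (q : ℂ) = (x : ℂ) := by push_cast; ring
    have := h3 z ((x - q : ℝ) : ℂ)
    rw [e] at this
    exact this
  -- each coefficient is a constant function
  have hconst : ∀ (n : ℤ) (z : ℂ), c n z = c n 0 := by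
    intro n z
    refine stmt9_liou τ hτ (c n) (hcd n) (fun z => ?_) (fun z => ?_) z 0
    · rw [hcp, norm_mul, stmt9E_norm, one_mul]
    · rw [hcq, norm_mul, stmt9E_norm, one_mul]
  -- nonzero coefficients vanish
  have hzero : ∀ n : ℤ, n ≠ 0 → ∀ z : ℂ, c n z = 0 := by
    intro n hn z
    by_contra hne
    have h2pi : (2 * (Real.pi : ℂ) * Complex.I) ≠ 0 := by
      refine mul_ne_zero (mul_ne_zero two_ne_zero ?_) Complex.I_ne_zero
      exact_mod_cast Real.pi_ne_zero
    have hc0 : c n 0 ≠ 0 := by rw [← hconst n z]; exact hne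
    have hEp : stmt9E n (p : ℂ) = 1 := by
      have h := hcp n 0
      rw [hconst n (0 + 1)] at h
      have := mul_right_cancel₀ hc0 (by rw [one_mul]; exact h : 1 * c n 0 = stmt9E n (p:ℂ) * c n 0)
      exact this.symm
    have hEq : stmt9E n (q : ℂ) = 1 := by
      have h := hcq n 0
      rw [hconst n (0 + τ)] at h
      have := mul_right_cancel₀ hc0 (by rw [one_mul]; exact h : 1 * c n 0 = stmt9E n (q:ℂ) * c n 0)
      exact this.symm
    obtain ⟨k, hk⟩ := Complex.exp_eq_one_iff.1 (by rw [stmt9E] at hEp; exact hEp)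
    obtain ⟨l, hl⟩ := Complex.exp_eq_one_iff.1 (by rw [stmt9E] at hEq; exact hEq)
    have hkp : ((n : ℝ) * p + (k : ℝ) : ℝ) = 0 := by
      have hC : ((n : ℂ) * (p : ℂ) + (k : ℂ)) * (2 * (Real.pi : ℂ) * Complex.I) = 0 := by
        linear_combination -hk
      have hC' : ((n : ℂ) * (p : ℂ) + (k : ℂ)) = 0 := by
        rcases mul_eq_zero.1 hC with h | h
        · exact h
        · exact absurd h h2pi
      exact_mod_cast hC'
    have hlq : ((n : ℝ) * q + (l : ℝ) : ℝ) = 0 := by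
      have hC : ((n : ℂ) * (q : ℂ) + (l : ℂ)) * (2 * (Real.pi : ℂ) * Complex.I) = 0 := by
        linear_combination -hl
      have hC' : ((n : ℂ) * (q : ℂ) + (l : ℂ)) = 0 := by
        rcases mul_eq_zero.1 hC with h | h
        · exact h
        · exact absurd h h2pi
      exact_mod_cast hC'
    have habs : ((n.natAbs : ℕ) : ℝ) = |(n : ℝ)| := by
      rw [Nat.cast_natAbs]
      exact_mod_cast rfl
    refine hpq ⟨n.natAbs, Int.natAbs_pos.2 hn, ?_, ?_⟩
    · rcases le_or_gt 0 (n : ℝ) with h | h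
      · refine ⟨-k, ?_⟩
        rw [habs, _root_.abs_of_nonneg h]
        push_cast
        linarith
      · refine ⟨k, ?_⟩
        rw [habs, _root_.abs_of_neg h]
        push_cast
        linarith
    · rcases le_or_gt 0 (n : ℝ) with h | h
      · refine ⟨-l, ?_⟩
        rw [habs, _root_.abs_of_nonneg h]
        push_cast
        linarith
      · refine ⟨l, ?_⟩
        rw [habs, _root_.abs_of_neg h]
        push_cast
        linarith
  -- `F (z, w) = c 0 z` for every `w`
  have key : ∀ z w : ℂ, F (z, w) = c 0 z := by
    intro z w
    set y : ℝ := w.im with hy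
    set φ : ℝ → ℂ := fun x : ℝ => F (z, (x : ℂ) + (y : ℂ) * Complex.I) with hφ
    have hφc : Continuous φ :=
      hF.continuous.comp (continuous_const.prodMk
        ((Complex.continuous_ofReal.add continuous_const)))
    have hφp : Periodic φ 1 := by
      intro x
      simp only [hφ]
      have e : ((x + 1 : ℝ) : ℂ) + (y : ℂ) * Complex.I
          = ((x : ℂ) + (y : ℂ) * Complex.I) + 1 := by push_cast; ring
      rw [e, h1]
    have hrect : ∀ n : ℤ, (∫ x in (0:ℝ)..1, φ x * stmt9E n (x:ℂ)) * stmt9E n ((y:ℂ) * Complex.I)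
        = c n z := fun n => stmt9_rect hF h1 n z y
    have hn' : ∀ n : ℤ, n ≠ 0 → (∫ x in (0:ℝ)..1, φ x * stmt9E n (x:ℂ)) = 0 := by
      intro n hn
      have := hrect n
      rw [hzero n hn z] at this
      exact (mul_eq_zero.1 this).resolve_right (stmt9E_ne_zero n _)
    have h0' : (∫ x in (0:ℝ)..1, φ x * stmt9E 0 (x:ℂ)) = c 0 z := by
      have := hrect 0
      rwa [stmt9E_zero, mul_one] at this
    have hval := stmt9_fourier hφc hφp (c 0 z) hn' h0'
    have hx : Int.fract w.re ∈ Ico (0:ℝ) 1 := ⟨Int.fract_nonneg _, Int.fract_lt_one _⟩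
    have hw : w = (((Int.fract w.re : ℝ) : ℂ) + (y : ℂ) * Complex.I) + ((⌊w.re⌋ : ℤ) : ℂ) := by
      apply Complex.ext
      · simp only [Complex.add_re, Complex.ofReal_re, Complex.mul_re, Complex.ofReal_im,
          Complex.I_re, Complex.I_im, Complex.intCast_re]
        have := Int.floor_add_fract w.re
        linarith
      · simp only [Complex.add_im, Complex.ofReal_im, Complex.mul_im, Complex.ofReal_re,
          Complex.I_re, Complex.I_im, Complex.intCast_im]
        simp [hy]
    calc F (z, w) = F (z, (((Int.fract w.re : ℝ) : ℂ) + (y : ℂ) * Complex.I) + ((⌊w.re⌋ : ℤ) : ℂ)) := by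
          rw [← hw]
      _ = F (z, ((Int.fract w.re : ℝ) : ℂ) + (y : ℂ) * Complex.I) := hZ _ _ _
      _ = φ (Int.fract w.re) := rfl
      _ = c 0 z := hval _ hx
  -- conclude
  have hc0 : ∀ z : ℂ, c 0 z = c 0 0 := hconst 0
  intro x y
  calc F x = F (x.1, x.2) := by rw [Prod.mk.eta]
    _ = c 0 x.1 := key x.1 x.2
    _ = c 0 0 := hc0 x.1
    _ = c 0 y.1 := (hc0 y.1).symm
    _ = F (y.1, y.2) := (key y.1 y.2).symm
    _ = F y := by rw [Prod.mk.eta]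
end
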